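/- Let 0 < F < Q be integers and define intervals I₁ = (−∞, −F], I₂ = (−F, Q−F), I₃ = [Q−F, ∞). Suppose U satisfies the case-(II) recursion U_{n+1} = 0 if Ψ_n ≤ −F, U_{n+1} = F + Ψ_n if −F < Ψ_n < Q−F, U_{n+1} = Q if Ψ_n ≥ Q−F, where Ψ_n = U_{n−1} − U_n. If (Ψ_n, Ψ_{n+1}) ∈ I₂ × I₁ for some n, then there exists n' > n with (Ψ_{n'}, Ψ_{n'+1}) ∈ I₁ × I₃. -/
import Mathlib


theorem escape_I2_I1 (F Q : ℤ) (h1 : 0 < F) (h2 : F < Q) (U : ℕ → ℤ)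
    (hrec : ∀ n, U (n + 2) =
      if U n - U (n + 1) ≤ -F then 0
      else if U n - U (n + 1) < Q - F then F + (U n - U (n + 1))
      else Q)
    (n : ℕ)
    (hI2 : -F < U n - U (n + 1) ∧ U n - U (n + 1) < Q - F)
    (hI1 : U (n + 1) - U (n + 2) ≤ -F) :
    ∃ n' > n, U n' - U (n' + 1) ≤ -F ∧ Q - F ≤ U (n' + 1) - U (n' + 2) := by
  suffices h : ∀ k : ℕ, ∀ m, n ≤ m → -F < U m - U (m + 1) → U m - U (m + 1) < Q - F →
      U (m + 1) - U (m + 2) ≤ -F → Q - F - (U m - U (m + 1)) ≤ (k : ℤ) →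
      ∃ n' > n, U n' - U (n' + 1) ≤ -F ∧ Q - F ≤ U (n' + 1) - U (n' + 2) by
    obtain ⟨k, hk⟩ := exists_nat_ge (Q - F - (U n - U (n + 1)))
    exact h k n le_rfl hI2.1 hI2.2 hI1 hk
  intro k
  induction k with
  | zero => intro m _ _ h2' _ hk; simp at hk; omega
  | succ k ih =>
    intro m hm hlt hlt2 hI1' hk
    have hU2 : U (m + 2) = F + (U m - U (m + 1)) := by
      rw [hrec m, if_neg (by omega), if_pos hlt2]
    have h13 := hrec (m + 1)
    rw [show m + 1 + 2 = m + 3 from rfl, show m + 1 + 1 = m + 2 from rfl] at h13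
    have hU3 : U (m + 3) = 0 := by rw [h13, if_pos hI1']
    have h24 := hrec (m + 2)
    rw [show m + 2 + 2 = m + 4 from rfl, show m + 2 + 1 = m + 3 from rfl] at h24
    by_cases hcase : Q - F ≤ U (m + 2) - U (m + 3)
    · have hU4 : U (m + 4) = Q := by
        rw [h24, if_neg (by omega), if_neg (by omega)]
      have hΨ3 : U (m + 3) - U (m + 4) ≤ -F := by omega
      have h35 := hrec (m + 3)
      rw [show m + 3 + 2 = m + 5 from rfl, show m + 3 + 1 = m + 4 from rfl] at h35
      have hU5 : U (m + 5) = 0 := by rw [h35, if_pos hΨ3]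
      refine ⟨m + 3, by omega, hΨ3, ?_⟩
      show Q - F ≤ U (m + 4) - U (m + 3 + 2)
      rw [show m + 3 + 2 = m + 5 from rfl]; omega
    · have hU4 : U (m + 4) = F + (U (m + 2) - U (m + 3)) := by
        rw [h24, if_neg (by omega), if_pos (by omega)]
      have hΨ3 : U (m + 3) - U (m + 4) ≤ -F := by omega
      have h4 := ih (m + 2) (by omega)
      rw [show m + 2 + 1 = m + 3 from rfl, show m + 2 + 2 = m + 4 from rfl] at h4
      exact h4 (by omega) (by omega) hΨ3 (by push_cast at hk ⊢; omega)
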